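/- The bilinear form ⟨Ψ, Φ⟩ = Re(Ψ† Γ⁰ Φ) on ℍ⁴ is skew-symmetric, and for any 𝒜 ∈ 𝒱 satisfies ⟨𝒜Ψ, 𝒜Φ⟩ = -h(𝒜,𝒜)⟨Ψ, Φ⟩; in particular it is invariant under products of pairs of unit vectors (Spin(6,1)-invariance). -/

import Mathlib

open Matrix

/-- The 2×2 hermitian quaternionic matrix `(t+x, y; y*, t-x)`. -/
noncomputable def qherm (t x : ℝ) (y : Quaternion ℝ) : Matrix (Fin 2) (Fin 2) (Quaternion ℝ) :=
  !![((t + x : ℝ) : Quaternion ℝ), y; star y, ((t - x : ℝ) : Quaternion ℝ)]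

/-- Trace reversal `Ã = A - (tr A)·1`. -/
noncomputable def qtilde (M : Matrix (Fin 2) (Fin 2) (Quaternion ℝ)) :
    Matrix (Fin 2) (Fin 2) (Quaternion ℝ) :=
  M - (Matrix.trace M) • (1 : Matrix (Fin 2) (Fin 2) (Quaternion ℝ))

/-- An element `(a·1, Ã; A, -a·1)` of the 7-dimensional Minkowski space
`𝒱 ⊆ ℍ[4]`, where `A = (t+x, y; y*, t-x) ∈ h₂(ℍ)`. -/
noncomputable def vmat (a t x : ℝ) (y : Quaternion ℝ) :
    Matrix (Fin 2 ⊕ Fin 2) (Fin 2 ⊕ Fin 2) (Quaternion ℝ) :=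
  Matrix.fromBlocks (a • 1) (qtilde (qherm t x y)) (qherm t x y) (-(a • 1))

/-- The block matrix `Γ⁰ = (0, -1; 1, 0)`. -/
noncomputable def Gamma0 : Matrix (Fin 2 ⊕ Fin 2) (Fin 2 ⊕ Fin 2) (Quaternion ℝ) :=
  Matrix.fromBlocks 0 (-1) 1 0

/-- The pairing `⟨Ψ, Φ⟩ = Re(Ψ† Γ⁰ Φ)` on `𝒮 = ℍ⁴`. -/
noncomputable def spinPair (Ψ Φ : Fin 2 ⊕ Fin 2 → Quaternion ℝ) : ℝ :=
  (dotProduct (star ∘ Ψ) (Gamma0 *ᵥ Φ)).re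

lemma aux_h1 (t x : ℝ) (y : Quaternion ℝ) :
    qherm t x y * qtilde (qherm t x y) =
      ((x ^ 2 - t ^ 2 + (y * star y).re : ℝ) • 1 : Matrix (Fin 2) (Fin 2) (Quaternion ℝ)) := by
  apply Matrix.ext
  intro i j
  fin_cases i <;> fin_cases j <;>
  · simp [qherm, qtilde, Matrix.mul_apply, Fin.sum_univ_two, Matrix.trace_fin_two,
      Matrix.one_apply]
    apply Quaternion.ext <;>
      simp [Quaternion.re_mul, Quaternion.imI_mul, Quaternion.imJ_mul, Quaternion.imK_mul,
        Quaternion.re_one, Quaternion.imI_one, Quaternion.imJ_one,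
        Quaternion.imK_one, Quaternion.re_zero, Quaternion.imI_zero,
        Quaternion.imJ_zero, Quaternion.imK_zero] <;>
      ring

lemma aux_h2 (t x : ℝ) (y : Quaternion ℝ) :
    qtilde (qherm t x y) * qherm t x y =
      ((x ^ 2 - t ^ 2 + (y * star y).re : ℝ) • 1 : Matrix (Fin 2) (Fin 2) (Quaternion ℝ)) := by
  apply Matrix.ext
  intro i j
  fin_cases i <;> fin_cases j <;>
  · simp [qherm, qtilde, Matrix.mul_apply, Fin.sum_univ_two, Matrix.trace_fin_two,
      Matrix.one_apply]
    apply Quaternion.ext <;>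
      simp [Quaternion.re_mul, Quaternion.imI_mul, Quaternion.imJ_mul, Quaternion.imK_mul,
        Quaternion.re_one, Quaternion.imI_one, Quaternion.imJ_one,
        Quaternion.imK_one, Quaternion.re_zero, Quaternion.imI_zero,
        Quaternion.imJ_zero, Quaternion.imK_zero] <;>
      ring

lemma aux_h3 (t x : ℝ) (y : Quaternion ℝ) : (qherm t x y)ᴴ = qherm t x y := by
  apply Matrix.ext; intro i j
  fin_cases i <;> fin_cases j <;> simp [qherm, Matrix.conjTranspose_apply] <;>
    first
      | rfl
      | (apply Quaternion.ext <;> simp)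

lemma aux_h4 (t x : ℝ) (y : Quaternion ℝ) : (qtilde (qherm t x y))ᴴ = qtilde (qherm t x y) := by
  apply Matrix.ext; intro i j
  fin_cases i <;> fin_cases j <;>
    simp [qherm, qtilde, Matrix.conjTranspose_apply, Matrix.trace_fin_two, Matrix.one_apply] <;>
    first
      | rfl
      | (apply Quaternion.ext <;> simp)

lemma aux_h5 (a : ℝ) : (a • (1 : Matrix (Fin 2) (Fin 2) (Quaternion ℝ)))ᴴ = a • 1 := by
  apply Matrix.ext; intro i j
  fin_cases i <;> fin_cases j <;>
    simp [Matrix.conjTranspose_apply, Matrix.one_apply, Matrix.smul_apply] <;>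
    first
      | rfl
      | (apply Quaternion.ext <;> simp)

lemma aux_key (a t x : ℝ) (y : Quaternion ℝ) :
    (vmat a t x y)ᴴ * (Gamma0 * vmat a t x y) =
      (-(a ^ 2 + (-(t ^ 2 - x ^ 2 - (y * star y).re))) : ℝ) • Gamma0 := by
  rw [vmat, Gamma0, Matrix.fromBlocks_conjTranspose, Matrix.fromBlocks_multiply,
    Matrix.fromBlocks_multiply, aux_h3, aux_h4, Matrix.conjTranspose_neg, aux_h5,
    Matrix.fromBlocks_smul]
  have e1 := aux_h1 t x y
  have e2 := aux_h2 t x y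
  rw [Matrix.fromBlocks_inj]
  refine ⟨?_, ?_, ?_, ?_⟩ <;>
    simp [e1, e2, Matrix.smul_mul, smul_smul, Quaternion.re_mul] <;> module

/-- The bilinear form `⟨Ψ, Φ⟩ = Re(Ψ† Γ⁰ Φ)` on `ℍ⁴` is skew-symmetric and satisfies
`⟨𝒜Ψ, 𝒜Φ⟩ = -h(𝒜,𝒜)⟨Ψ, Φ⟩` for every vector `𝒜 ∈ 𝒱`; in particular it is
invariant under products of pairs of unit vectors (Spin(6,1)-invariance). -/
theorem spinPair_skew_and_invariant :
    (∀ Ψ Φ : Fin 2 ⊕ Fin 2 → Quaternion ℝ, spinPair Ψ Φ = -spinPair Φ Ψ) ∧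
    (∀ (a t x : ℝ) (y : Quaternion ℝ) (Ψ Φ : Fin 2 ⊕ Fin 2 → Quaternion ℝ),
      spinPair (vmat a t x y *ᵥ Ψ) (vmat a t x y *ᵥ Φ) =
        -(a ^ 2 + (-(t ^ 2 - x ^ 2 - (y * star y).re))) * spinPair Ψ Φ) := by
  constructor
  · intro Ψ Φ
    simp [spinPair, Gamma0, dotProduct, Matrix.mulVec, Fintype.sum_sum_type,
      Fin.sum_univ_two, Matrix.fromBlocks, Quaternion.re_mul, Quaternion.re_add]
    ring
  · intro a t x y Ψ Φ
    set c : ℝ := -(a ^ 2 + (-(t ^ 2 - x ^ 2 - (y * star y).re))) with hc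
    have hstar : (star ∘ (vmat a t x y *ᵥ Ψ)) = star Ψ ᵥ* (vmat a t x y)ᴴ := by
      exact Matrix.star_mulVec (vmat a t x y) Ψ
    calc spinPair (vmat a t x y *ᵥ Ψ) (vmat a t x y *ᵥ Φ)
        = ((star Ψ ᵥ* (vmat a t x y)ᴴ) ⬝ᵥ ((Gamma0 * vmat a t x y) *ᵥ Φ)).re := by
          rw [spinPair, hstar, Matrix.mulVec_mulVec]
      _ = ((star Ψ ᵥ* ((vmat a t x y)ᴴ * (Gamma0 * vmat a t x y))) ⬝ᵥ Φ).re := by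
          rw [Matrix.dotProduct_mulVec, Matrix.vecMul_vecMul]
      _ = ((star Ψ) ⬝ᵥ ((c • Gamma0) *ᵥ Φ)).re := by
          rw [aux_key, ← Matrix.dotProduct_mulVec]
      _ = (c • ((star Ψ) ⬝ᵥ (Gamma0 *ᵥ Φ))).re := by
          rw [Matrix.smul_mulVec, dotProduct_smul]
      _ = c * ((star Ψ) ⬝ᵥ (Gamma0 *ᵥ Φ)).re := by
          simp [Quaternion.re_smul, smul_eq_mul]
      _ = c * spinPair Ψ Φ := by
          rw [spinPair]
          rfl
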